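/- The DR pseudo-outcome γ is exactly insensitive to perturbations of any single response-function nuisance: fix j₀ ∈ {0,…,n} and a bounded 𝒢_{j₀}-measurable δ : Ω → ℝ, and let γ̃ be obtained from γ := (∏_{j=0}^{n} 1_{A_j}/π_j)·Y + Σ_{j=0}^{n} μ_j·(1 − 1_{A_j}/π_j)·∏_{k=0}^{j−1} 1_{A_k}/π_k by replacing μ_{j₀} with μ_{j₀} + δ. Then E[γ̃ | 𝒢_0] = E[γ | 𝒢_0] P-almost surely (in particular ∫ γ̃ dP = ∫ γ dP). (This is the component of the Neyman-orthogonality of the DR pseudo-outcome with respect to the response functions used in the proof of Theorem 2.) -/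

import Mathlib

open MeasureTheory Finset

/-- **Exact insensitivity of the DR pseudo-outcome to perturbations of a single
response-function nuisance** (component of the Neyman-orthogonality of the DR
pseudo-outcome with respect to the response functions, used in the proof of Theorem 2).
Fix `j₀ ∈ {0,…,n}` and a bounded `𝒢_{j₀}`-measurable `δ`, and let `γ̃` be obtained from
`γ := (∏_{j=0}^{n} 1_{A_j}/π_j)·Y + Σ_{j=0}^{n} μ_j·(1 − 1_{A_j}/π_j)·∏_{k<j} 1_{A_k}/π_k`
by replacing `μ_{j₀}` with `μ_{j₀} + δ`. Then `E[γ̃ | 𝒢_0] = E[γ | 𝒢_0]` P-almost surely,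
and in particular `∫ γ̃ dP = ∫ γ dP`. -/
theorem DR_pseudo_outcome_orthogonal_response
    {Ω : Type*} {F : MeasurableSpace Ω} {P : Measure Ω} [IsProbabilityMeasure P]
    (n : ℕ) (G : ℕ → MeasurableSpace Ω) (hG_mono : Monotone G) (hG_le : ∀ j, G j ≤ F)
    (A : ℕ → Set Ω) (hA : ∀ j ≤ n, MeasurableSet[G (j + 1)] (A j))
    (π : ℕ → Ω → ℝ) (hπ_meas : ∀ j ≤ n, Measurable[G j] (π j))
    (ε : ℝ) (hε : 0 < ε) (hπ_bd : ∀ j ≤ n, ∀ᵐ x ∂P, ε ≤ π j x ∧ π j x ≤ 1)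
    (hπ_ce : ∀ j ≤ n, π j =ᵐ[P] P[(A j).indicator (fun _ => (1 : ℝ)) | G j])
    (Y : Ω → ℝ) (hY_meas : Measurable Y) (CY : ℝ) (hY_bd : ∀ x, |Y x| ≤ CY)
    (μ : ℕ → Ω → ℝ) (hμ_meas : ∀ j ≤ n, Measurable[G j] (μ j))
    (Cμ : ℝ) (hμ_bd : ∀ j ≤ n, ∀ x, |μ j x| ≤ Cμ)
    (j₀ : ℕ) (hj₀ : j₀ ≤ n)
    (δ : Ω → ℝ) (hδ_meas : Measurable[G j₀] δ) (Cδ : ℝ) (hδ_bd : ∀ x, |δ x| ≤ Cδ)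
    (μ' : ℕ → Ω → ℝ)
    (hμ' : μ' = fun j => if j = j₀ then (fun x => μ j x + δ x) else μ j)
    (γ γ' : Ω → ℝ)
    (hγ : γ = fun x =>
      (∏ j ∈ range (n + 1), (A j).indicator (fun _ => (1 : ℝ)) x / π j x) * Y x
      + ∑ j ∈ range (n + 1),
          μ j x * (1 - (A j).indicator (fun _ => (1 : ℝ)) x / π j x)
            * ∏ k ∈ range j, (A k).indicator (fun _ => (1 : ℝ)) x / π k x)
    (hγ' : γ' = fun x =>
      (∏ j ∈ range (n + 1), (A j).indicator (fun _ => (1 : ℝ)) x / π j x) * Y x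
      + ∑ j ∈ range (n + 1),
          μ' j x * (1 - (A j).indicator (fun _ => (1 : ℝ)) x / π j x)
            * ∏ k ∈ range j, (A k).indicator (fun _ => (1 : ℝ)) x / π k x) :
    P[γ' | G 0] =ᵐ[P] P[γ | G 0] ∧ ∫ x, γ' x ∂P = ∫ x, γ x ∂P := by
  classical
  have hmemj₀ : j₀ ∈ range (n + 1) := mem_range.mpr (Nat.lt_succ_of_le hj₀)
  -- measurability facts over the ambient σ-algebra
  have hIm : ∀ j, j ≤ n → Measurable ((A j).indicator (fun _ => (1 : ℝ))) :=
    fun j hj => measurable_const.indicator (hG_le (j + 1) _ (hA j hj))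
  have hπm : ∀ j, j ≤ n → Measurable (π j) :=
    fun j hj => (hπ_meas j hj).mono (hG_le j) le_rfl
  have hrm : ∀ j, j ≤ n →
      Measurable (fun x => (A j).indicator (fun _ => (1 : ℝ)) x / π j x) :=
    fun j hj => (hIm j hj).div (hπm j hj)
  have hprodm : ∀ m, m ≤ n + 1 → Measurable
      (fun x => ∏ k ∈ range m, (A k).indicator (fun _ => (1 : ℝ)) x / π k x) := by
    intro m hm
    apply Finset.measurable_prod
    intro k hk
    exact hrm k (Nat.lt_succ_iff.mp (lt_of_lt_of_le (mem_range.mp hk) hm))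
  -- the perturbation term
  set W : Ω → ℝ := fun x => ∏ k ∈ range j₀, (A k).indicator (fun _ => (1 : ℝ)) x / π k x
    with hW
  set Z : Ω → ℝ := fun x =>
    δ x * ((1 - (A j₀).indicator (fun _ => (1 : ℝ)) x / π j₀ x) * W x) with hZ
  -- split γ' = γ + Z
  have hsplit : γ' = γ + Z := by
    funext x
    simp only [hγ, hγ', hμ', hZ, hW, Pi.add_apply]
    have h1 : ∑ j ∈ range (n + 1),
        (if j = j₀ then (fun x => μ j x + δ x) else μ j) x
          * (1 - (A j).indicator (fun _ => (1 : ℝ)) x / π j x)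
          * ∏ k ∈ range j, (A k).indicator (fun _ => (1 : ℝ)) x / π k x
        = ∑ j ∈ range (n + 1),
          (μ j x * (1 - (A j).indicator (fun _ => (1 : ℝ)) x / π j x)
              * ∏ k ∈ range j, (A k).indicator (fun _ => (1 : ℝ)) x / π k x
            + if j = j₀ then
                δ x * ((1 - (A j).indicator (fun _ => (1 : ℝ)) x / π j x)
                  * ∏ k ∈ range j, (A k).indicator (fun _ => (1 : ℝ)) x / π k x)
              else 0) := by
      refine Finset.sum_congr rfl fun j _ => ?_
      by_cases h : j = j₀ <;> simp [h] <;> ring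
    rw [h1, Finset.sum_add_distrib, Finset.sum_ite_eq' (range (n + 1)) j₀, if_pos hmemj₀]
    ring
  -- a.e. bounds on π
  have hπ_ae : ∀ᵐ x ∂P, ∀ j, j ≤ n → ε ≤ π j x ∧ π j x ≤ 1 := by
    rw [ae_all_iff]
    intro j
    by_cases h : j ≤ n
    · filter_upwards [hπ_bd j h] with x hx _ using hx
    · filter_upwards with x h' using absurd h' h
  have hind01 : ∀ j x, 0 ≤ (A j).indicator (fun _ => (1 : ℝ)) x
      ∧ (A j).indicator (fun _ => (1 : ℝ)) x ≤ 1 := by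
    intro j x
    by_cases h : x ∈ A j <;> simp [Set.indicator_apply, h]
  have hr_bd : ∀ j x, ε ≤ π j x →
      |(A j).indicator (fun _ => (1 : ℝ)) x / π j x| ≤ 1 / ε := by
    intro j x hπx
    rw [abs_div, abs_of_nonneg (hind01 j x).1, abs_of_pos (lt_of_lt_of_le hε hπx)]
    exact div_le_div₀ zero_le_one (hind01 j x).2 hε hπx
  have hprod_bd : ∀ (x : Ω), (∀ j, j ≤ n → ε ≤ π j x ∧ π j x ≤ 1) → ∀ m, m ≤ n + 1 →
      |∏ k ∈ range m, (A k).indicator (fun _ => (1 : ℝ)) x / π k x| ≤ (1 / ε) ^ m := by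
    intro x hx m hm
    rw [Finset.abs_prod]
    calc ∏ k ∈ range m, |(A k).indicator (fun _ => (1 : ℝ)) x / π k x|
        ≤ ∏ _k ∈ range m, (1 / ε) :=
          Finset.prod_le_prod (fun k _ => abs_nonneg _)
            (fun k hk => hr_bd k x
              (hx k (Nat.lt_succ_iff.mp (lt_of_lt_of_le (mem_range.mp hk) hm))).1)
      _ = (1 / ε) ^ m := by simp
  -- integrability of Z
  have hZm : Measurable Z := by
    exact (hδ_meas.mono (hG_le j₀) le_rfl).mul
      ((measurable_const.sub (hrm j₀ hj₀)).mul
        (hprodm j₀ (le_trans hj₀ (Nat.le_succ n))))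
  have hZ_bd : ∀ᵐ x ∂P, ‖Z x‖ ≤ Cδ * ((1 + 1 / ε) * (1 / ε) ^ j₀) := by
    filter_upwards [hπ_ae] with x hx
    have h1 : |1 - (A j₀).indicator (fun _ => (1 : ℝ)) x / π j₀ x| ≤ 1 + 1 / ε := by
      calc |1 - (A j₀).indicator (fun _ => (1 : ℝ)) x / π j₀ x|
          ≤ |(1 : ℝ)| + |(A j₀).indicator (fun _ => (1 : ℝ)) x / π j₀ x| := abs_sub _ _
        _ ≤ 1 + 1 / ε := by
            rw [abs_one]; exact add_le_add_right (hr_bd j₀ x (hx j₀ hj₀).1) 1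
    have h2 := hprod_bd x hx j₀ (le_trans hj₀ (Nat.le_succ n))
    have hCδ : 0 ≤ Cδ := le_trans (abs_nonneg _) (hδ_bd x)
    rw [Real.norm_eq_abs, hZ]
    simp only
    rw [abs_mul, abs_mul]
    refine mul_le_mul (hδ_bd x) ?_ (by positivity) hCδ
    refine mul_le_mul h1 h2 (abs_nonneg _) (by positivity)
  have hZ_int : Integrable Z P :=
    ⟨hZm.aestronglyMeasurable, HasFiniteIntegral.of_bounded hZ_bd⟩
  -- integrability of γ
  have hγm : Measurable γ := by
    rw [hγ]
    refine ((hprodm (n + 1) le_rfl).mul hY_meas).add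
      (Finset.measurable_sum _ fun j hj => ?_)
    have hjn : j ≤ n := Nat.lt_succ_iff.mp (mem_range.mp hj)
    exact (((hμ_meas j hjn).mono (hG_le j) le_rfl).mul
      (measurable_const.sub (hrm j hjn))).mul (hprodm j (by omega))
  have hγ_bd : ∀ᵐ x ∂P, ‖γ x‖ ≤ (1 / ε) ^ (n + 1) * CY
      + ((n : ℝ) + 1) * (Cμ * ((1 + 1 / ε) * (1 / ε) ^ n)) := by
    filter_upwards [hπ_ae] with x hx
    have hε1 : ε ≤ 1 := le_trans (hx 0 (Nat.zero_le n)).1 (hx 0 (Nat.zero_le n)).2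
    have h1ε : (1 : ℝ) ≤ 1 / ε := by rw [le_div_iff₀ hε]; linarith
    rw [Real.norm_eq_abs, hγ]
    simp only
    refine le_trans (abs_add_le _ _) (add_le_add ?_ ?_)
    · rw [abs_mul]
      exact mul_le_mul (hprod_bd x hx (n + 1) le_rfl) (hY_bd x) (abs_nonneg _)
        (by positivity)
    · refine le_trans (Finset.abs_sum_le_sum_abs _ _) ?_
      have hterm : ∀ j ∈ range (n + 1),
          |μ j x * (1 - (A j).indicator (fun _ => (1 : ℝ)) x / π j x)
            * ∏ k ∈ range j, (A k).indicator (fun _ => (1 : ℝ)) x / π k x|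
          ≤ Cμ * ((1 + 1 / ε) * (1 / ε) ^ n) := by
        intro j hj
        have hjn : j ≤ n := Nat.lt_succ_iff.mp (mem_range.mp hj)
        have hCμ : 0 ≤ Cμ := le_trans (abs_nonneg _) (hμ_bd j hjn x)
        have h1 : |1 - (A j).indicator (fun _ => (1 : ℝ)) x / π j x| ≤ 1 + 1 / ε := by
          calc |1 - (A j).indicator (fun _ => (1 : ℝ)) x / π j x|
              ≤ |(1 : ℝ)| + |(A j).indicator (fun _ => (1 : ℝ)) x / π j x| := abs_sub _ _
            _ ≤ 1 + 1 / ε := by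
                rw [abs_one]; exact add_le_add_right (hr_bd j x (hx j hjn).1) 1
        have h2 : |∏ k ∈ range j, (A k).indicator (fun _ => (1 : ℝ)) x / π k x|
            ≤ (1 / ε) ^ n :=
          le_trans (hprod_bd x hx j (by omega)) (pow_le_pow_right₀ h1ε hjn)
        rw [abs_mul, abs_mul]
        calc |μ j x| * |1 - (A j).indicator (fun _ => (1 : ℝ)) x / π j x|
              * |∏ k ∈ range j, (A k).indicator (fun _ => (1 : ℝ)) x / π k x|
            ≤ Cμ * (1 + 1 / ε) * (1 / ε) ^ n := by
              refine mul_le_mul ?_ h2 (abs_nonneg _) (by positivity)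
              exact mul_le_mul (hμ_bd j hjn x) h1 (abs_nonneg _) hCμ
          _ = Cμ * ((1 + 1 / ε) * (1 / ε) ^ n) := by ring
      calc ∑ j ∈ range (n + 1),
            |μ j x * (1 - (A j).indicator (fun _ => (1 : ℝ)) x / π j x)
              * ∏ k ∈ range j, (A k).indicator (fun _ => (1 : ℝ)) x / π k x|
          ≤ ∑ _j ∈ range (n + 1), Cμ * ((1 + 1 / ε) * (1 / ε) ^ n) :=
            Finset.sum_le_sum hterm
        _ = ((n : ℝ) + 1) * (Cμ * ((1 + 1 / ε) * (1 / ε) ^ n)) := by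
            rw [Finset.sum_const, Finset.card_range, nsmul_eq_mul]
            push_cast
            ring
  have hγ_int : Integrable γ P :=
    ⟨hγm.aestronglyMeasurable, HasFiniteIntegral.of_bounded hγ_bd⟩
  have hγ'_int : Integrable γ' P := by
    rw [hsplit]; exact hγ_int.add hZ_int
  -- G j₀-measurability of the nuisance part
  have hprodGm : Measurable[G j₀] W := by
    apply Finset.measurable_prod
    intro k hk
    have hk1 : k + 1 ≤ j₀ := mem_range.mp hk
    have hkn : k ≤ n := le_trans (Nat.le_of_succ_le hk1) hj₀
    have hIk : Measurable[G (k + 1)] ((A k).indicator (fun _ => (1 : ℝ))) :=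
      measurable_const.indicator (hA k hkn)
    exact (hIk.mono (hG_mono hk1) le_rfl).div
      ((hπ_meas k hkn).mono (hG_mono (le_trans (Nat.le_succ k) hk1)) le_rfl)
  have hfGm : Measurable[G j₀] (fun x => δ x * W x) := hδ_meas.mul hprodGm
  have hqGm : Measurable[G j₀] (fun x => δ x * W x / π j₀ x) := hfGm.div (hπ_meas j₀ hj₀)
  -- integrability of f = δ·W
  have hf_bd : ∀ᵐ x ∂P, ‖δ x * W x‖ ≤ Cδ * (1 / ε) ^ j₀ := by
    filter_upwards [hπ_ae] with x hx
    rw [Real.norm_eq_abs, abs_mul]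
    exact mul_le_mul (hδ_bd x) (hprod_bd x hx j₀ (by omega)) (abs_nonneg _)
      (le_trans (abs_nonneg _) (hδ_bd x))
  have hf_int : Integrable (fun x => δ x * W x) P :=
    ⟨((hδ_meas.mono (hG_le j₀) le_rfl).mul
        (hprodm j₀ (by omega))).aestronglyMeasurable,
      HasFiniteIntegral.of_bounded hf_bd⟩
  -- g := q · 1_{A j₀} equals f - Z
  have hgI : ((fun x => δ x * W x / π j₀ x)
        * fun x => (A j₀).indicator (fun _ => (1 : ℝ)) x)
      = fun x => δ x * W x - Z x := by
    funext x
    simp only [Pi.mul_apply, hZ]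
    ring
  have hg_int : Integrable ((fun x => δ x * W x / π j₀ x)
      * fun x => (A j₀).indicator (fun _ => (1 : ℝ)) x) P := by
    rw [hgI]; exact hf_int.sub hZ_int
  have hI_int : Integrable ((A j₀).indicator (fun _ => (1 : ℝ))) P :=
    ⟨(hIm j₀ hj₀).aestronglyMeasurable,
      HasFiniteIntegral.of_bounded (C := 1) (ae_of_all _ fun x => by
        rw [Real.norm_eq_abs, abs_of_nonneg (hind01 j₀ x).1]
        exact (hind01 j₀ x).2)⟩
  -- pull-out property and the cancellation
  have hce1 := condExp_mul_of_stronglyMeasurable_left (μ := P)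
    hqGm.stronglyMeasurable hg_int hI_int
  have hce2 : (fun x => δ x * W x / π j₀ x)
      * P[fun x => (A j₀).indicator (fun _ => (1 : ℝ)) x | G j₀]
      =ᵐ[P] fun x => δ x * W x := by
    filter_upwards [hπ_ce j₀ hj₀, hπ_bd j₀ hj₀] with x h1 h2
    have hne : π j₀ x ≠ 0 := ne_of_gt (lt_of_lt_of_le hε h2.1)
    simp only [Pi.mul_apply]
    have h1' : (P[(A j₀).indicator (fun _ => (1 : ℝ)) | G j₀]) x = π j₀ x := h1.symm
    rw [show (P[fun x => (A j₀).indicator (fun _ => (1 : ℝ)) x | G j₀]) x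
        = (P[(A j₀).indicator (fun _ => (1 : ℝ)) | G j₀]) x from rfl, h1']
    exact div_mul_cancel₀ _ hne
  have hfeq : P[(fun x => δ x * W x) | G j₀] = fun x => δ x * W x :=
    condExp_of_stronglyMeasurable (hG_le j₀) hfGm.stronglyMeasurable hf_int
  have hZeq : Z = (fun x => δ x * W x) - ((fun x => δ x * W x / π j₀ x)
      * fun x => (A j₀).indicator (fun _ => (1 : ℝ)) x) := by
    rw [hgI]
    funext x
    simp only [Pi.sub_apply]
    ring
  have hZce : P[Z | G j₀] =ᵐ[P] 0 := by
    rw [hZeq]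
    refine (condExp_sub hf_int hg_int (G j₀)).trans ?_
    filter_upwards [hce1, hce2] with x h1 h2
    have h3 := congrFun hfeq x
    simp only [Pi.sub_apply, Pi.zero_apply, h3, h1, h2]
    ring
  -- tower property down to G 0
  have hZ0 : P[Z | G 0] =ᵐ[P] 0 := by
    have h := condExp_condExp_of_le (μ := P) (hG_mono (Nat.zero_le j₀)) (hG_le j₀)
      (f := Z)
    refine h.symm.trans ((condExp_congr_ae hZce).trans ?_)
    rw [condExp_zero]
  constructor
  · rw [hsplit]
    refine (condExp_add hγ_int hZ_int (G 0)).trans ?_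
    filter_upwards [hZ0] with x hx
    simp only [Pi.add_apply, hx, Pi.zero_apply, add_zero]
  · rw [hsplit]
    simp only [Pi.add_apply]
    rw [integral_add hγ_int hZ_int]
    have hZint0 : ∫ x, Z x ∂P = 0 := by
      rw [← integral_condExp (hG_le j₀) (f := Z), integral_congr_ae hZce]; simp
    rw [hZint0, add_zero]
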